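/- Let ℓ ≥ 2 and let the topology G be the complete bipartite graph with parts A = {a_1, a_2} and B = {b_1, …, b_ℓ} (every a_i adjacent to every b_j and no other edges). Let there be two inhabitants h_1, h_2 with ι(h_i) = a_i for i ∈ {1,2} and ub(h_1) = ub(h_2) = 1, and let the number of refugees R satisfy 2 ≤ R ≤ ℓ. Then there exists no inhabitants-respecting housing of size R in this instance (even though no inhabitant is intolerant). -/
import Mathlib

/-- If the topology is the complete bipartite graph
`K_{2,ℓ}` with parts `A = Fin 2` and `B = Fin ℓ`, the two inhabitants occupy
the vertices of `A` and both have upper-bound `1`, and `2 ≤ R ≤ ℓ`, then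
there is no inhabitants-respecting housing of size `R` (even though no
inhabitant is intolerant). -/
theorem complete_bipartite_two_inhabitants_no_housing
    (ℓ R : ℕ) (hℓ : 2 ≤ ℓ)
    (G : SimpleGraph (Fin 2 ⊕ Fin ℓ)) [DecidableRel G.Adj]
    (hadj : ∀ u v, G.Adj u v ↔
      ((∃ a, u = Sum.inl a) ∧ (∃ b, v = Sum.inr b)) ∨
      ((∃ b, u = Sum.inr b) ∧ (∃ a, v = Sum.inl a)))
    (ub : Fin 2 → ℕ) (hub : ∀ i, ub i = 1)
    (hR2 : 2 ≤ R) (hRℓ : R ≤ ℓ) :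
    ¬ ∃ π : Finset (Fin 2 ⊕ Fin ℓ),
        (∀ v ∈ π, ∀ i : Fin 2, v ≠ Sum.inl i) ∧ π.card = R ∧
        ∀ i : Fin 2, (π.filter (fun v => G.Adj (Sum.inl i) v)).card ≤ ub i := by
  rintro ⟨π, hemp, hcard, hresp⟩
  have hfilt : π.filter (fun v => G.Adj (Sum.inl 0) v) = π := by
    apply Finset.filter_true_of_mem
    intro v hv
    rcases v with a | b
    · exact absurd rfl (hemp _ hv a)
    · exact (hadj _ _).2 (Or.inl ⟨⟨0, rfl⟩, ⟨b, rfl⟩⟩)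
  have := hresp 0
  rw [hfilt, hcard, hub] at this
  omega
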